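/- There exist ν₋ < 0 < ν₊ such that for every ν ∈ [ν₋, 0] and every ξ ∈ (0, ν₊] there is a time T > 0 such that every solution z of z' = F_ν(z) defined on [0, ∞) with z(0) ∈ B_{ν₊} satisfies z(t) ∈ B_ξ for all t > T; consequently every such solution converges to the origin (0, 0) as t → ∞, and (0, 0) is an attracting fixed point of F_ν. -/

import Mathlib

open Set

/-- The planar vector field `F_ν(x, y) = (x(ν − x²) + x³y + xy², −y + x²y + x⁴)`. -/
noncomputable def F (ν : ℝ) (p : ℝ × ℝ) : ℝ × ℝ :=
  (p.1 * (ν - p.1 ^ 2) + p.1 ^ 3 * p.2 + p.1 * p.2 ^ 2,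
   -p.2 + p.1 ^ 2 * p.2 + p.1 ^ 4)

/-- The box `B_θ = [−√(2θ), √(2θ)] × [−θ, θ]`. -/
noncomputable def B (θ : ℝ) : Set (ℝ × ℝ) :=
  Icc (-Real.sqrt (2 * θ)) (Real.sqrt (2 * θ)) ×ˢ Icc (-θ) θ

namespace Stmt2Aux

/-- The squared-norm Lyapunov-type function along a trajectory. -/
noncomputable def rr (z : ℝ → ℝ × ℝ) (t : ℝ) : ℝ := (z t).1 ^ 2 + (z t).2 ^ 2

/-- Its formal derivative along the flow. -/
noncomputable def rho (ν : ℝ) (z : ℝ → ℝ × ℝ) (t : ℝ) : ℝ :=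
  2 * (z t).1 * (F ν (z t)).1 + 2 * (z t).2 * (F ν (z t)).2

lemma hasDerivAt_rr {ν : ℝ} {z : ℝ → ℝ × ℝ}
    (hz : ∀ t ∈ Ici (0:ℝ), HasDerivAt z (F ν (z t)) t) {t : ℝ} (ht : (0:ℝ) ≤ t) :
    HasDerivAt (rr z) (rho ν z t) t := by
  have h := hz t ht
  have h1 : HasDerivAt (fun s => (z s).1) (F ν (z t)).1 t := h.fst
  have h2 : HasDerivAt (fun s => (z s).2) (F ν (z t)).2 t := h.snd
  have := (h1.fun_pow 2).fun_add (h2.fun_pow 2)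
  refine this.congr_deriv ?_
  simp only [rho]
  ring

lemma key_ineq {ν x y : ℝ} (hν : ν ≤ 0) (h : x^2 + y^2 ≤ 1/16) :
    2 * x * (x * (ν - x ^ 2) + x ^ 3 * y + x * y ^ 2)
      + 2 * y * (-y + x ^ 2 * y + x ^ 4) ≤ -(x^2+y^2)^2/2 := by
  have hx : x^2 ≤ 1/16 := by nlinarith [sq_nonneg y]
  have hy : y^2 ≤ 1/16 := by nlinarith [sq_nonneg x]
  have hy1 : y ≤ 1/4 := by nlinarith
  have hy2 : -(1/4) ≤ y := by nlinarith
  nlinarith [sq_nonneg (x^2), sq_nonneg y, sq_nonneg (x*y),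
    mul_nonneg (sq_nonneg (x^2)) (sub_nonneg.2 hy2),
    mul_nonneg (mul_nonneg (sq_nonneg x) (sq_nonneg x)) (sub_nonneg.2 hy1),
    mul_nonpos_of_nonpos_of_nonneg hν (sq_nonneg x)]

lemma rho_le {ν : ℝ} {z : ℝ → ℝ × ℝ} (hν : ν ≤ 0) {t : ℝ}
    (h : rr z t ≤ 1/16) : rho ν z t ≤ -(rr z t)^2/2 := by
  have := key_ineq (x := (z t).1) (y := (z t).2) hν h
  simpa [rho, rr, F] using this

lemma rr_nonneg (z : ℝ → ℝ × ℝ) (t : ℝ) : 0 ≤ rr z t :=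
  add_nonneg (sq_nonneg _) (sq_nonneg _)

/-- Forward invariance of the region `rr ≤ 1/16`. -/
lemma invariant {ν : ℝ} {z : ℝ → ℝ × ℝ} (hν : ν ≤ 0)
    (hz : ∀ t ∈ Ici (0:ℝ), HasDerivAt z (F ν (z t)) t)
    (h0 : rr z 0 ≤ 1/16) : ∀ t, 0 ≤ t → rr z t ≤ 1/16 := by
  intro t₀ ht₀
  by_contra hc
  push_neg at hc
  have rcont : ContinuousOn (rr z) (Icc 0 t₀) := fun s hs =>
    (hasDerivAt_rr hz hs.1).continuousAt.continuousWithinAt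
  set A : Set ℝ := Icc 0 t₀ ∩ rr z ⁻¹' Iic (1/16) with hA
  have hA0 : (0:ℝ) ∈ A := ⟨⟨le_refl _, ht₀⟩, h0⟩
  have hAne : A.Nonempty := ⟨0, hA0⟩
  have hAbdd : BddAbove A := ⟨t₀, fun s hs => hs.1.2⟩
  have hAclosed : IsClosed A :=
    rcont.preimage_isClosed_of_isClosed isClosed_Icc isClosed_Iic
  set m := sSup A with hm
  have hmA : m ∈ A := hAclosed.csSup_mem hAne hAbdd
  have hm0 : 0 ≤ m := hmA.1.1
  have hmt₀ : m ≤ t₀ := hmA.1.2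
  have hrm : rr z m ≤ 1/16 := hmA.2
  have hmlt : m < t₀ := lt_of_le_of_ne hmt₀ (by
    intro h; rw [h] at hrm; exact absurd hrm (not_le.2 hc))
  have hgt : ∀ s ∈ Ioc m t₀, 1/16 < rr z s := by
    intro s hs
    by_contra h
    push_neg at h
    have : s ∈ A := ⟨⟨hm0.trans hs.1.le, hs.2⟩, h⟩
    exact absurd (le_csSup hAbdd this) (not_le.2 hs.1)
  -- r m = 1/16 by right-continuity
  have hcwa : Filter.Tendsto (rr z) (nhdsWithin m (Ioi m)) (nhds (rr z m)) :=
    (hasDerivAt_rr hz hm0).continuousAt.continuousWithinAt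
  have hIoc : Ioc m t₀ ∈ nhdsWithin m (Ioi m) := Ioc_mem_nhdsGT_of_mem ⟨le_refl _, hmlt⟩
  have hge : (1:ℝ)/16 ≤ rr z m := by
    refine ge_of_tendsto hcwa ?_
    filter_upwards [hIoc] with s hs
    exact (hgt s hs).le
  have hrmeq : rr z m = 1/16 := le_antisymm hrm hge
  -- derivative at m is strictly negative
  have hd : HasDerivAt (rr z) (rho ν z m) m := hasDerivAt_rr hz hm0
  have hρneg : rho ν z m < 0 := by
    have := rho_le hν (t := m) hrm
    rw [hrmeq] at this
    nlinarith
  rw [hasDerivAt_iff_tendsto_slope] at hd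
  have hev : ∀ᶠ s in nhdsWithin m {m}ᶜ, slope (rr z) m s < 0 :=
    hd (gt_mem_nhds hρneg)
  have hev' : ∀ᶠ s in nhdsWithin m (Ioi m), slope (rr z) m s < 0 :=
    hev.filter_mono (nhdsWithin_mono m (fun x hx => ne_of_gt hx))
  obtain ⟨s, hslope, hsIoc⟩ := (hev'.and (Filter.eventually_of_mem hIoc fun x hx => hx)).exists
  have hsm : m < s := hsIoc.1
  have : rr z s < rr z m := by
    have hslope' : (rr z s - rr z m) / (s - m) < 0 := by
      rw [slope_def_field] at hslope
      simpa [div_eq_inv_mul] using hslope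
    have := (div_neg_iff.1 hslope')
    rcases this with ⟨h1, h2⟩ | ⟨h1, h2⟩
    · linarith [sub_pos.2 hsm]
    · linarith
  rw [hrmeq] at this
  exact absurd this (not_lt.2 (hgt s hsIoc).le)

/-- Uniform decay: `rr z t ≤ ε` for all `t ≥ 1/ε²`. -/
lemma decay {ν : ℝ} {z : ℝ → ℝ × ℝ} (hν : ν ≤ 0)
    (hz : ∀ t ∈ Ici (0:ℝ), HasDerivAt z (F ν (z t)) t)
    (h0 : rr z 0 ≤ 1/16) {ε : ℝ} (hε : 0 < ε) :
    ∀ t, 1/ε^2 ≤ t → rr z t ≤ ε := by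
  have hinv := invariant hν hz h0
  have hT : (0:ℝ) < 1/ε^2 := by positivity
  -- r is antitone on Ici 0
  have hanti : AntitoneOn (rr z) (Ici 0) := by
    refine antitoneOn_of_deriv_nonpos (convex_Ici 0) ?_ ?_ ?_
    · exact fun s hs => (hasDerivAt_rr hz hs).continuousAt.continuousWithinAt
    · intro s hs
      rw [interior_Ici] at hs
      exact (hasDerivAt_rr hz hs.le).differentiableAt.differentiableWithinAt
    · intro s hs
      rw [interior_Ici] at hs
      rw [(hasDerivAt_rr hz hs.le).deriv]
      have := rho_le hν (t := s) (hinv s hs.le)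
      nlinarith [sq_nonneg (rr z s)]
  -- there is a time s ∈ [0, 1/ε²] with rr z s ≤ ε
  have hclaim : ∃ s ∈ Icc (0:ℝ) (1/ε^2), rr z s ≤ ε := by
    by_contra hc
    push_neg at hc
    set g : ℝ → ℝ := fun s => rr z s + ε^2/2 * s with hg
    have hganti : AntitoneOn g (Icc 0 (1/ε^2)) := by
      refine antitoneOn_of_deriv_nonpos (convex_Icc _ _) ?_ ?_ ?_
      · intro s hs
        exact (((hasDerivAt_rr hz hs.1).add
          ((hasDerivAt_id s).const_mul (ε^2/2))).continuousAt).continuousWithinAt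
      · intro s hs
        rw [interior_Icc] at hs
        exact (((hasDerivAt_rr hz hs.1.le).add
          ((hasDerivAt_id s).const_mul (ε^2/2))).differentiableAt).differentiableWithinAt
      · intro s hs
        rw [interior_Icc] at hs
        have hds : HasDerivAt g (rho ν z s + ε^2/2 * 1) s :=
          (hasDerivAt_rr hz hs.1.le).add ((hasDerivAt_id s).const_mul (ε^2/2))
        rw [hds.deriv]
        have h1 := rho_le hν (t := s) (hinv s hs.1.le)
        have h2 : ε < rr z s := hc s ⟨hs.1.le, hs.2.le⟩
        nlinarith
    have hgle : g (1/ε^2) ≤ g 0 :=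
      hganti ⟨le_refl _, hT.le⟩ ⟨hT.le, le_refl _⟩ hT.le
    have hεT : ε^2/2 * (1/ε^2) = 1/2 := by field_simp
    have hrT : ε < rr z (1/ε^2) := hc _ ⟨hT.le, le_refl _⟩
    simp only [hg, mul_zero, add_zero] at hgle
    rw [hεT] at hgle
    nlinarith
  obtain ⟨s, hs, hrs⟩ := hclaim
  intro t ht
  exact le_trans (hanti (mem_Ici.2 hs.1) (mem_Ici.2 (hT.le.trans ht)) (hs.2.trans ht)) hrs

lemma rr_init {z : ℝ → ℝ × ℝ} (hz0 : z 0 ∈ B (1/64 : ℝ)) : rr z 0 ≤ 1/16 := by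
  obtain ⟨hx, hy⟩ := hz0
  rw [mem_Icc] at hx hy
  have hs : Real.sqrt (2 * (1/64)) ^ 2 = 2 * (1/64) := Real.sq_sqrt (by norm_num)
  have hx2 : (z 0).1 ^ 2 ≤ 2 * (1/64 : ℝ) := by
    rw [← hs]
    exact sq_le_sq' hx.1 hx.2
  have hy2 : (z 0).2 ^ 2 ≤ (1/64 : ℝ)^2 := sq_le_sq' hy.1 hy.2
  simp only [rr]
  nlinarith

lemma abs_le_of_sq_le {a b : ℝ} (hb : 0 ≤ b) (h : a^2 ≤ b^2) : |a| ≤ b := by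
  have := Real.sqrt_le_sqrt h
  rwa [Real.sqrt_sq_eq_abs, Real.sqrt_sq hb] at this

end Stmt2Aux

open Stmt2Aux in
/-- There exist `ν₋ < 0 < ν₊` such that for every `ν ∈ [ν₋, 0]` and every `ξ ∈ (0, ν₊]`
there is `T > 0` such that every solution starting in `B_{ν₊}` lies in `B_ξ` for `t > T`;
consequently every such solution converges to the origin, which is a fixed point of `F_ν`. -/
theorem stmt2 :
    ∃ νm νp : ℝ, νm < 0 ∧ 0 < νp ∧ ∀ ν ∈ Icc νm (0 : ℝ),
      (∀ ξ ∈ Ioc (0 : ℝ) νp, ∃ T : ℝ, 0 < T ∧ ∀ z : ℝ → ℝ × ℝ,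
        (∀ t ∈ Ici (0 : ℝ), HasDerivAt z (F ν (z t)) t) →
        z 0 ∈ B νp → ∀ t > T, z t ∈ B ξ) ∧
      (∀ z : ℝ → ℝ × ℝ,
        (∀ t ∈ Ici (0 : ℝ), HasDerivAt z (F ν (z t)) t) →
        z 0 ∈ B νp → Filter.Tendsto z Filter.atTop (nhds ((0 : ℝ), (0 : ℝ)))) ∧
      F ν ((0 : ℝ), (0 : ℝ)) = ((0 : ℝ), (0 : ℝ)) := by
  refine ⟨-1, 1/64, by norm_num, by norm_num, ?_⟩
  rintro ν ⟨-, hν⟩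
  refine ⟨?_, ?_, ?_⟩
  · -- eventual entry into B ξ
    rintro ξ ⟨hξ0, hξ1⟩
    refine ⟨1/(ξ^2)^2, by positivity, ?_⟩
    intro z hz hz0 t ht
    have hT : (0:ℝ) < 1/(ξ^2)^2 := by positivity
    have hrt : rr z t ≤ ξ^2 :=
      decay hν hz (rr_init hz0) (by positivity) t ht.le
    have hx2 : (z t).1 ^ 2 ≤ ξ^2 := by
      have := rr_nonneg z t
      simp only [rr] at hrt ⊢
      nlinarith [sq_nonneg (z t).2]
    have hy2 : (z t).2 ^ 2 ≤ ξ^2 := by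
      simp only [rr] at hrt
      nlinarith [sq_nonneg (z t).1]
    constructor
    · -- first coordinate
      have h2ξ : (z t).1 ^ 2 ≤ 2 * ξ := by nlinarith
      have habs : |(z t).1| ≤ Real.sqrt (2 * ξ) := by
        have := Real.sqrt_le_sqrt h2ξ
        rwa [Real.sqrt_sq_eq_abs] at this
      rw [mem_Icc]
      exact abs_le.1 habs
    · have habs : |(z t).2| ≤ ξ := abs_le_of_sq_le hξ0.le hy2
      rw [mem_Icc]
      exact abs_le.1 habs
  · -- convergence to the origin
    intro z hz hz0
    rw [Metric.tendsto_atTop]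
    intro ε hε
    refine ⟨1/((ε/2)^2)^2, ?_⟩
    intro t ht
    have hrt : rr z t ≤ (ε/2)^2 :=
      decay hν hz (rr_init hz0) (by positivity) t ht
    have hx : |(z t).1| ≤ ε/2 := by
      apply abs_le_of_sq_le (by positivity)
      simp only [rr] at hrt; nlinarith [sq_nonneg (z t).2]
    have hy : |(z t).2| ≤ ε/2 := by
      apply abs_le_of_sq_le (by positivity)
      simp only [rr] at hrt; nlinarith [sq_nonneg (z t).1]
    rw [Prod.dist_eq]
    simp only [Real.dist_eq, sub_zero]
    have : ε/2 < ε := by linarith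
    exact max_lt (lt_of_le_of_lt hx this) (lt_of_le_of_lt hy this)
  · -- fixed point
    simp [F]
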